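/- Let f : X → X be a continuous self-map of a compact metric space and x ∈ X. Suppose that for every ε > 0 there exists x_ε ∈ X such that ω(x_ε, f) is a periodic orbit or an odometer and limsup_{i→∞} d(f^i(x), f^i(x_ε)) ≤ ε. Then ω(x, f) is a periodic orbit or an odometer. -/

import Mathlib

set_option linter.unusedSectionVars false
set_option linter.unusedVariables false


open Filter Topology Metric Set

/-- A periodic structure: a sequence of positive integers with `m j ∣ m (j+1)` and `m j → ∞`. -/
structure PeriodicStructure where
  m : ℕ → ℕ
  pos : ∀ j, 0 < m j
  dvd : ∀ j, m j ∣ m (j + 1)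
  tendsto : Filter.Tendsto m Filter.atTop Filter.atTop

/-- The odometer space `X_m` of a periodic structure. -/
def PeriodicStructure.space (p : PeriodicStructure) : Type :=
  {x : ℕ → ℕ // ∀ j, x j < p.m j ∧ x (j + 1) % p.m j = x j}

instance (p : PeriodicStructure) : TopologicalSpace p.space :=
  inferInstanceAs (TopologicalSpace
    {x : ℕ → ℕ // ∀ j, x j < p.m j ∧ x (j + 1) % p.m j = x j})

/-- The odometer map `g_m` (adding 1 coordinatewise mod `m j`). -/
def PeriodicStructure.step (p : PeriodicStructure) (x : p.space) : p.space :=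
  ⟨fun j => (x.1 j + 1) % p.m j, by
    intro j
    refine ⟨Nat.mod_lt _ (p.pos j), ?_⟩
    show (x.1 (j + 1) + 1) % p.m (j + 1) % p.m j = (x.1 j + 1) % p.m j
    rw [Nat.mod_mod_of_dvd _ (p.dvd j), ← (x.2 j).2, Nat.add_mod]
    exact Nat.add_mod_mod _ _ _⟩

/-- `S` is an odometer for `f`: `f` restricted to `S` is topologically conjugate to
an odometer `g_m : X_m → X_m`. -/
def IsOdometer {X : Type*} [TopologicalSpace X] (f : X → X) (S : Set X) : Prop :=
  ∃ p : PeriodicStructure, ∃ h : p.space ≃ₜ S,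
    ∀ z : p.space, f ((h z : X)) = ((h (p.step z) : X))

/-- `S` is a periodic orbit of `f`. -/
def IsPeriodicOrbit {X : Type*} (f : X → X) (S : Set X) : Prop :=
  ∃ x ∈ S, ∃ i : ℕ, 0 < i ∧ f^[i] x = x ∧ S = {y | ∃ j < i, f^[j] x = y}

/-- The ω-limit set of a sequence of points. -/
def omegaLimitSeq {X : Type*} [TopologicalSpace X] (x : ℕ → X) : Set X :=
  {y | ∃ φ : ℕ → ℕ, StrictMono φ ∧
    Filter.Tendsto (fun j => x (φ j)) Filter.atTop (nhds y)}

/-- The ω-limit set `ω(x, f)` of a point. -/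
def omegaLimitPt {X : Type*} [TopologicalSpace X] (f : X → X) (x : X) : Set X :=
  omegaLimitSeq fun i => f^[i] x

/-- `M` is a minimal set for `f`. -/
def IsMinimalSet {X : Type*} [TopologicalSpace X] (f : X → X) (M : Set X) : Prop :=
  M.Nonempty ∧ IsClosed M ∧ Set.MapsTo f M M ∧
    ∀ S ⊆ M, IsClosed S → Set.MapsTo f S S → S = ∅ ∨ S = M

/-- `x` is a minimal point for `f`. -/
def IsMinimalPoint {X : Type*} [TopologicalSpace X] (f : X → X) (x : X) : Prop :=
  IsMinimalSet f (closure (Set.range fun i => f^[i] x))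

/-- `x` is a regularly recurrent point for `f`. -/
def RegularlyRecurrent {X : Type*} [PseudoMetricSpace X] (f : X → X) (x : X) : Prop :=
  ∀ ε > 0, ∃ n : ℕ, 0 < n ∧ ∀ k : ℕ, dist x (f^[k * n] x) ≤ ε

/-- `f` has the shadowing property. -/
def ShadowingProperty {X : Type*} [PseudoMetricSpace X] (f : X → X) : Prop :=
  ∀ ε > 0, ∃ δ > 0, ∀ ξ : ℕ → X,
    (∀ i, dist (f (ξ i)) (ξ (i + 1)) ≤ δ) → ∃ y, ∀ i, dist (f^[i] y) (ξ i) ≤ ε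

section PartOne
variable {X : Type*} [MetricSpace X] {f : X → X}

lemma mem_omegaSeq_iff {u : ℕ → X} {y : X} :
    y ∈ omegaLimitSeq u ↔ ∀ ε > (0:ℝ), ∀ N : ℕ, ∃ i, N ≤ i ∧ dist (u i) y ≤ ε := by
  constructor
  · rintro ⟨φ, hφ, htend⟩ ε hε N
    obtain ⟨J, hJ⟩ := (Metric.tendsto_atTop.mp htend) ε hε
    exact ⟨φ (max J N), le_trans (le_max_right J N) (hφ.le_apply),
      (hJ _ (le_max_left J N)).le⟩
  · intro H
    have H' : ∀ n prev : ℕ, ∃ i, prev + 1 ≤ i ∧ dist (u i) y ≤ 1/(n+1) := by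
      intro n prev
      obtain ⟨i, hi1, hi2⟩ := H (1/(n+1)) (by positivity) (prev + 1)
      exact ⟨i, hi1, hi2⟩
    choose g hg1 hg2 using H'
    set φ : ℕ → ℕ := fun n => Nat.rec (g 0 0) (fun n ih => g (n+1) ih) n with hφdef
    have hstep : ∀ n, φ (n+1) = g (n+1) (φ n) := fun n => rfl
    have hmono : StrictMono φ := by
      apply strictMono_nat_of_lt_succ
      intro n
      rw [hstep]
      have := hg1 (n+1) (φ n)
      omega
    have hdist : ∀ n, dist (u (φ n)) y ≤ 1/(n+1) := by
      intro n
      cases n with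
      | zero => exact hg2 0 0
      | succ m => rw [hstep]; exact hg2 (m+1) (φ m)
    refine ⟨φ, hmono, ?_⟩
    rw [tendsto_iff_dist_tendsto_zero]
    apply squeeze_zero (fun n => dist_nonneg) hdist
    exact tendsto_one_div_add_atTop_nhds_zero_nat

lemma omegaSeq_closed (u : ℕ → X) : IsClosed (omegaLimitSeq u) := by
  rw [← isOpen_compl_iff]
  rw [isOpen_iff_forall_mem_open]
  intro y hy
  rw [mem_compl_iff, mem_omegaSeq_iff] at hy
  push_neg at hy
  obtain ⟨ε, hε, N, hN⟩ := hy
  refine ⟨ball y (ε/2), ?_, isOpen_ball, mem_ball_self (by linarith)⟩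
  intro z hz
  rw [mem_compl_iff, mem_omegaSeq_iff]
  push_neg
  refine ⟨ε/2, by linarith, N, ?_⟩
  intro i hi
  have := hN i hi
  have hz' : dist z y < ε/2 := hz
  have : dist (u i) y ≤ dist (u i) z + dist z y := dist_triangle _ _ _
  by_contra hc
  push_neg at hc
  linarith [hN i hi]

variable [CompactSpace X]

lemma omegaSeq_nonempty (u : ℕ → X) : (omegaLimitSeq u).Nonempty := by
  obtain ⟨a, -, φ, hφ, htend⟩ := isCompact_univ.tendsto_subseq (x := u) (fun n => mem_univ _)
  exact ⟨a, φ, hφ, htend⟩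

lemma tendsto_shift (hf : Continuous f) {φ : ℕ → ℕ} {x w : X} (t : ℕ)
    (ht : Tendsto (fun j => f^[φ j] x) atTop (𝓝 w)) :
    Tendsto (fun j => f^[φ j + t] x) atTop (𝓝 (f^[t] w)) := by
  have h2 := ((hf.iterate t).continuousAt (x := w)).tendsto.comp ht
  convert h2 using 2 with j
  rw [add_comm, Function.iterate_add_apply]
  rfl

lemma omega_iterate_mem (hf : Continuous f) {x u : X} (t : ℕ)
    (hu : u ∈ omegaLimitPt f x) : f^[t] u ∈ omegaLimitPt f x := by
  obtain ⟨φ, hφ, htend⟩ := hu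
  exact ⟨fun j => φ j + t, hφ.add_const t, tendsto_shift hf t htend⟩

/-- uniform continuity of finitely many iterates -/
lemma unif_iter (hf : Continuous f) {ε : ℝ} (hε : 0 < ε) (m : ℕ) :
    ∃ δ > (0:ℝ), ∀ i ≤ m, ∀ a b : X, dist a b ≤ δ → dist (f^[i] a) (f^[i] b) ≤ ε := by
  induction m with
  | zero =>
    refine ⟨ε, hε, ?_⟩
    intro i hi a b hab
    interval_cases i
    simpa using hab
  | succ m ih =>
    obtain ⟨δ₁, hδ₁, h1⟩ := ih
    have hcont : UniformContinuous f^[m+1] :=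
      CompactSpace.uniformContinuous_of_continuous (hf.iterate (m+1))
    obtain ⟨δ₂, hδ₂, h2⟩ := Metric.uniformContinuous_iff.mp hcont ε hε
    refine ⟨min δ₁ (δ₂/2), by positivity, ?_⟩
    intro i hi a b hab
    rcases Nat.lt_succ_iff_lt_or_eq.mp (Nat.lt_succ_of_le hi) with hi' | hi'
    · exact h1 i (Nat.lt_succ_iff.mp hi') a b (le_trans hab (min_le_left _ _))
    · subst hi'
      exact (h2 (lt_of_le_of_lt (le_trans hab (min_le_right _ _)) (by linarith))).le

end PartOne

section PartTwo
variable {X : Type*} [MetricSpace X] {f : X → X}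

lemma PeriodicStructure.dvd_le (p : PeriodicStructure) {l j : ℕ} (h : l ≤ j) :
    p.m l ∣ p.m j := by
  induction j, h using Nat.le_induction with
  | base => exact dvd_rfl
  | succ j hj ih => exact ih.trans (p.dvd j)

lemma step_iter_coord (p : PeriodicStructure) (t : ℕ) (z : p.space) (j : ℕ) :
    (p.step^[t] z).1 j = (z.1 j + t) % p.m j := by
  induction t with
  | zero => simp [Nat.mod_eq_of_lt (z.2 j).1]
  | succ t ih =>
    rw [Function.iterate_succ_apply']
    show ((p.step^[t] z).1 j + 1) % p.m j = _
    rw [ih, Nat.mod_add_mod, Nat.add_assoc]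

lemma coord_mod (p : PeriodicStructure) (z : p.space) {l j : ℕ} (h : l ≤ j) :
    z.1 j % p.m l = z.1 l := by
  induction j, h using Nat.le_induction with
  | base => exact Nat.mod_eq_of_lt (z.2 l).1
  | succ j hj ih => rw [← Nat.mod_mod_of_dvd _ (p.dvd_le hj), (z.2 j).2, ih]

lemma conj_iter {S : Set X} (p : PeriodicStructure) (hh : p.space ≃ₜ S)
    (hconj : ∀ z : p.space, f ((hh z : X)) = ((hh (p.step z) : X))) :
    ∀ (t : ℕ) (z : p.space), f^[t] ((hh z : X)) = ((hh (p.step^[t] z) : X)) := by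
  intro t
  induction t with
  | zero => intro z; simp
  | succ t ih =>
    intro z
    rw [Function.iterate_succ_apply, hconj z, ih (p.step z), ← Function.iterate_succ_apply]

lemma cylinder [CompactSpace X] {S : Set X} (hScl : IsClosed S) (p : PeriodicStructure)
    (hh : p.space ≃ₜ S) {ε : ℝ} (hε : 0 < ε) :
    ∃ J : ℕ, ∀ z w : p.space, (∀ l ≤ J, z.1 l = w.1 l) →
      dist ((hh z : X)) ((hh w : X)) ≤ ε := by
  haveI : CompactSpace S := isCompact_iff_compactSpace.mp hScl.isCompact
  haveI : CompactSpace p.space := hh.symm.compactSpace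
  by_contra hc
  push_neg at hc
  set T : ℕ → Set (p.space × p.space) := fun J =>
    {zw | (∀ l ≤ J, zw.1.1 l = zw.2.1 l) ∧ ε ≤ dist ((hh zw.1 : X)) ((hh zw.2 : X))} with hT
  have hTcl : ∀ J, IsClosed (T J) := by
    intro J
    rw [hT]
    simp only [Set.setOf_and]
    apply IsClosed.inter
    · have : {zw : p.space × p.space | ∀ l ≤ J, zw.1.1 l = zw.2.1 l} =
          ⋂ l, ⋂ (_ : l ≤ J), {zw : p.space × p.space | zw.1.1 l = zw.2.1 l} := by
        ext zw; simp
      rw [this]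
      refine isClosed_iInter fun l => isClosed_iInter fun _ => isClosed_eq ?_ ?_
      · exact (continuous_apply l).comp (continuous_subtype_val.comp continuous_fst)
      · exact (continuous_apply l).comp (continuous_subtype_val.comp continuous_snd)
    · apply isClosed_le continuous_const
      apply Continuous.dist
      · exact continuous_subtype_val.comp (hh.continuous.comp continuous_fst)
      · exact continuous_subtype_val.comp (hh.continuous.comp continuous_snd)
  have hanti : ∀ J, T (J+1) ⊆ T J := by
    intro J zw hzw
    exact ⟨fun l hl => hzw.1 l (by omega), hzw.2⟩
  have hne : ∀ J, (T J).Nonempty := by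
    intro J
    obtain ⟨z, w, h1, h2⟩ := hc J
    exact ⟨(z, w), h1, h2.le⟩
  obtain ⟨⟨z, w⟩, hzw⟩ :=
    IsCompact.nonempty_iInter_of_sequence_nonempty_isCompact_isClosed T hanti hne
      ((hTcl 0).isCompact) hTcl
  have hmem : ∀ J, (z, w) ∈ T J := fun J => mem_iInter.mp hzw J
  have hzweq : z = w := by
    apply Subtype.ext
    funext l
    exact (hmem l).1 l le_rfl
  have := (hmem 0).2
  rw [hzweq] at this
  simp at this
  linarith

lemma iter_mod_of_periodic {x0 : X} {i : ℕ} (hi : 0 < i) (hx0 : f^[i] x0 = x0) :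
    ∀ a, f^[a] x0 = f^[a % i] x0 := by
  intro a
  induction a using Nat.strong_induction_on with
  | _ a ih =>
    by_cases ha : a < i
    · rw [Nat.mod_eq_of_lt ha]
    · push_neg at ha
      have h1 : f^[a] x0 = f^[a - i] x0 := by
        conv_lhs => rw [show a = (a - i) + i by omega]
        rw [Function.iterate_add_apply, hx0]
      rw [h1, ih (a - i) (by omega), Nat.mod_eq_sub_mod ha]

lemma source_props [CompactSpace X] (hf : Continuous f) {S : Set X} (hScl : IsClosed S)
    (hS : IsPeriodicOrbit f S ∨ IsOdometer f S) :
    (∀ ε > (0:ℝ), ∃ n, 0 < n ∧ ∀ s ∈ S, ∀ k, dist s (f^[k * n] s) ≤ ε) ∧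
    (∀ s ∈ S, ∀ u ∈ S, ∀ ε > (0:ℝ), ∃ t, dist (f^[t] s) u ≤ ε) := by
  rcases hS with ⟨x0, hx0S, i, hi, hx0, hSeq⟩ | ⟨p, hh, hconj⟩
  · constructor
    · intro ε hε
      refine ⟨i, hi, ?_⟩
      intro s hs k
      rw [hSeq] at hs
      obtain ⟨j, hj, rfl⟩ := hs
      have key : f^[k*i] (f^[j] x0) = f^[j] x0 := by
        rw [← Function.iterate_add_apply, iter_mod_of_periodic hi hx0 (k*i+j),
          mul_comm k i, Nat.mul_add_mod, Nat.mod_eq_of_lt hj]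
      rw [key, dist_self]
      exact hε.le
    · intro s hs u hu ε hε
      rw [hSeq] at hs hu
      obtain ⟨a, ha, rfl⟩ := hs
      obtain ⟨b, hb, rfl⟩ := hu
      refine ⟨(i - a) + b, ?_⟩
      have key : f^[(i - a) + b] (f^[a] x0) = f^[b] x0 := by
        rw [← Function.iterate_add_apply, show (i - a) + b + a = b + i by omega,
          Function.iterate_add_apply, hx0]
      rw [key, dist_self]
      exact hε.le
  · constructor
    · intro ε hε
      obtain ⟨J, hJ⟩ := cylinder hScl p hh hε
      refine ⟨p.m J, p.pos J, ?_⟩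
      intro s hs k
      set z := hh.symm ⟨s, hs⟩ with hz
      have hhz : ((hh z : X)) = s := by rw [hz, Homeomorph.apply_symm_apply]
      have key := conj_iter p hh hconj (k * p.m J) z
      rw [hhz] at key
      have hagree : ∀ l ≤ J, z.1 l = (p.step^[k * p.m J] z).1 l := by
        intro l hl
        rw [step_iter_coord]
        obtain ⟨c, hc⟩ : p.m l ∣ k * p.m J := (p.dvd_le hl).mul_left k
        rw [hc, Nat.add_mul_mod_self_left, Nat.mod_eq_of_lt (z.2 l).1]
      have hd := hJ z (p.step^[k * p.m J] z) hagree
      rw [hhz, ← key] at hd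
      exact hd
    · intro s hs u hu ε hε
      obtain ⟨J, hJ⟩ := cylinder hScl p hh hε
      set z := hh.symm ⟨s, hs⟩ with hz
      set w := hh.symm ⟨u, hu⟩ with hw
      set t : ℕ := p.m J + w.1 J - z.1 J with ht
      refine ⟨t, ?_⟩
      have hhz : ((hh z : X)) = s := by rw [hz, Homeomorph.apply_symm_apply]
      have hhw : ((hh w : X)) = u := by rw [hw, Homeomorph.apply_symm_apply]
      have key := conj_iter p hh hconj t z
      rw [hhz] at key
      have hagree : ∀ l ≤ J, (p.step^[t] z).1 l = w.1 l := by
        intro l hl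
        rw [step_iter_coord]
        have h1 : z.1 l = z.1 J % p.m l := (coord_mod p z hl).symm
        have h2 : w.1 l = w.1 J % p.m l := (coord_mod p w hl).symm
        have h3 : z.1 J + t = p.m J + w.1 J := by
          have := (z.2 J).1; omega
        obtain ⟨c, hc⟩ := p.dvd_le hl
        rw [h1, Nat.mod_add_mod, h3, hc, h2, Nat.mul_add_mod]
      have hd := hJ (p.step^[t] z) w hagree
      rw [hhw, ← key] at hd
      exact hd

end PartTwo

section PartThree
variable {X : Type*} [MetricSpace X] [CompactSpace X] {f : X → X}

set_option maxHeartbeats 1000000 in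
lemma pairing (hf : Continuous f) {x xe : X} {ε : ℝ} (hε : 0 < ε)
    (hlim : Filter.limsup (fun i => dist (f^[i] x) (f^[i] xe)) Filter.atTop ≤ ε)
    {u : X} (hu : u ∈ omegaLimitPt f x) :
    ∃ v ∈ omegaLimitPt f xe, ∀ t, dist (f^[t] u) (f^[t] v) ≤ 2*ε := by
  obtain ⟨φ, hφ, htend⟩ := hu
  obtain ⟨v, -, ψ, hψ, hvtend⟩ := isCompact_univ.tendsto_subseq
    (x := fun j => f^[φ j] xe) (fun n => mem_univ _)
  have hφψ : StrictMono (fun j => φ (ψ j)) := hφ.comp hψ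
  have hvtend' : Tendsto (fun j => f^[φ (ψ j)] xe) atTop (𝓝 v) := hvtend
  refine ⟨v, ⟨fun j => φ (ψ j), hφψ, hvtend'⟩, ?_⟩
  intro t
  have hutend : Tendsto (fun j => f^[φ (ψ j)] x) atTop (𝓝 u) :=
    htend.comp hψ.tendsto_atTop
  have h1 : Tendsto (fun j => f^[φ (ψ j) + t] x) atTop (𝓝 (f^[t] u)) :=
    tendsto_shift hf t hutend
  have h2 : Tendsto (fun j => f^[φ (ψ j) + t] xe) atTop (𝓝 (f^[t] v)) :=
    tendsto_shift hf t hvtend'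
  have hdt : Tendsto (fun j => dist (f^[φ (ψ j) + t] x) (f^[φ (ψ j) + t] xe))
      atTop (𝓝 (dist (f^[t] u) (f^[t] v))) := h1.dist h2
  -- eventual bound
  obtain ⟨C, hC⟩ := Metric.isBounded_iff.mp (isCompact_univ : IsCompact (univ : Set X)).isBounded
  have hbd : Filter.IsBoundedUnder (· ≤ ·) atTop (fun i => dist (f^[i] x) (f^[i] xe)) :=
    isBoundedUnder_of ⟨C, fun i => hC (mem_univ _) (mem_univ _)⟩
  have hev : ∀ᶠ i in atTop, dist (f^[i] x) (f^[i] xe) < 2*ε :=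
    Filter.eventually_lt_of_limsup_lt (lt_of_le_of_lt hlim (by linarith)) hbd
  have hten : Tendsto (fun j => φ (ψ j) + t) atTop atTop :=
    tendsto_atTop_mono (fun j => Nat.le_add_right _ t) hφψ.tendsto_atTop
  have hev2 : ∀ᶠ j in atTop,
      dist (f^[φ (ψ j) + t] x) (f^[φ (ψ j) + t] xe) ≤ 2*ε :=
    (hten.eventually hev).mono (fun j hj => hj.le)
  exact le_of_tendsto hdt hev2

lemma M_urr (hf : Continuous f) {x : X}
    (h : ∀ ε > (0 : ℝ), ∃ xe : X,
      (IsPeriodicOrbit f (omegaLimitPt f xe) ∨ IsOdometer f (omegaLimitPt f xe)) ∧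
      Filter.limsup (fun i => dist (f^[i] x) (f^[i] xe)) Filter.atTop ≤ ε) :
    ∀ η > (0:ℝ), ∃ n, 0 < n ∧ ∀ u ∈ omegaLimitPt f x, ∀ k,
      dist u (f^[k * n] u) ≤ η := by
  intro η hη
  obtain ⟨xe, hxe, hlim⟩ := h (η/5) (by positivity)
  obtain ⟨hU, -⟩ := source_props hf (omegaSeq_closed _) hxe
  obtain ⟨n, hn, hUn⟩ := hU (η/5) (by positivity)
  refine ⟨n, hn, ?_⟩
  intro u hu k
  obtain ⟨v, hv, hpair⟩ := pairing hf (by positivity : (0:ℝ) < η/5) hlim hu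
  have h0 := hpair 0
  simp only [Function.iterate_zero, id_eq] at h0
  have h1 := hUn v hv k
  have h2 := hpair (k * n)
  calc dist u (f^[k*n] u) ≤ dist u v + dist v (f^[k*n] v) + dist (f^[k*n] v) (f^[k*n] u) :=
        dist_triangle4 _ _ _ _
    _ ≤ 2*(η/5) + η/5 + 2*(η/5) := by
        have h2' : dist (f^[k*n] v) (f^[k*n] u) ≤ 2*(η/5) := by rw [dist_comm]; exact h2
        exact add_le_add (add_le_add h0 h1) h2'
    _ = η := by ring

lemma M_dense (hf : Continuous f) {x : X}
    (h : ∀ ε > (0 : ℝ), ∃ xe : X,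
      (IsPeriodicOrbit f (omegaLimitPt f xe) ∨ IsOdometer f (omegaLimitPt f xe)) ∧
      Filter.limsup (fun i => dist (f^[i] x) (f^[i] xe)) Filter.atTop ≤ ε) :
    ∀ z ∈ omegaLimitPt f x, ∀ u ∈ omegaLimitPt f x, ∀ η > (0:ℝ),
      ∃ t, dist (f^[t] z) u ≤ η := by
  intro z hz u hu η hη
  obtain ⟨xe, hxe, hlim⟩ := h (η/5) (by positivity)
  obtain ⟨-, hden⟩ := source_props hf (omegaSeq_closed _) hxe
  obtain ⟨vz, hvz, hpz⟩ := pairing hf (by positivity : (0:ℝ) < η/5) hlim hz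
  obtain ⟨vu, hvu, hpu⟩ := pairing hf (by positivity : (0:ℝ) < η/5) hlim hu
  obtain ⟨t, htd⟩ := hden vz hvz vu hvu (η/5) (by positivity)
  have h0 := hpu 0
  simp only [Function.iterate_zero, id_eq] at h0
  refine ⟨t, ?_⟩
  calc dist (f^[t] z) u ≤ dist (f^[t] z) (f^[t] vz) + dist (f^[t] vz) vu + dist vu u :=
        dist_triangle4 _ _ _ _
    _ ≤ 2*(η/5) + η/5 + 2*(η/5) := by
        have h0' : dist vu u ≤ 2*(η/5) := by rw [dist_comm]; exact h0
        exact add_le_add (add_le_add (hpz t) htd) h0'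
    _ = η := by ring

end PartThree

section PartFour
variable {X : Type*} [MetricSpace X] [CompactSpace X] {f : X → X}

lemma mapsTo_iterate_mul {A : Set X} {n : ℕ} (hA : MapsTo f^[n] A A) (i : ℕ) :
    MapsTo f^[i * n] A A := by
  induction i with
  | zero => simpa using Set.mapsTo_id A
  | succ i ih =>
    intro a ha
    rw [show (i+1)*n = i*n + n by ring, Function.iterate_add_apply]
    exact ih (hA ha)

lemma closure_range_iter_inv (hf : Continuous f) (u : X) (n : ℕ) :
    MapsTo f^[n] (closure (Set.range fun k => f^[k * n] u))
      (closure (Set.range fun k => f^[k * n] u)) := by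
  intro a ha
  have h1 : f^[n] '' (Set.range fun k => f^[k * n] u) ⊆ Set.range fun k => f^[k * n] u := by
    rintro - ⟨-, ⟨k, rfl⟩, rfl⟩
    exact ⟨k+1, by
      show f^[(k+1) * n] u = f^[n] (f^[k * n] u)
      rw [show (k+1)*n = n + k*n by ring, Function.iterate_add_apply]⟩
  exact closure_mono h1
    (image_closure_subset_closure_image (hf.iterate n) (Set.mem_image_of_mem _ ha))

lemma image_iter_image (s r : ℕ) (V : Set X) :
    f^[s] '' (f^[r] '' V) = f^[s + r] '' V := by
  rw [← Set.image_comp, ← Function.iterate_add]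

lemma image_iterate_mod {D : Set X} {q : ℕ} (hq : 0 < q) (hD : f^[q] '' D = D) (a : ℕ) :
    f^[a] '' D = f^[a % q] '' D := by
  induction a using Nat.strong_induction_on with
  | _ a ih =>
    by_cases ha : a < q
    · rw [Nat.mod_eq_of_lt ha]
    · push_neg at ha
      have h1 : f^[a] '' D = f^[a - q] '' D := by
        conv_lhs => rw [show a = (a - q) + q by omega, Function.iterate_add,
          Set.image_comp, hD]
      rw [h1, ih (a - q) (by omega), Nat.mod_eq_sub_mod ha]

lemma eq_of_dist_le_pow {a b : X} (h : ∀ j : ℕ, dist a b ≤ (2:ℝ)⁻¹ ^ j) : a = b := by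
  have h0 : dist a b ≤ 0 := by
    by_contra hc
    push_neg at hc
    obtain ⟨j, hj⟩ := exists_pow_lt_of_lt_one hc (by norm_num : (2:ℝ)⁻¹ < 1)
    exact absurd (h j) (by linarith)
  exact dist_le_zero.mp h0

lemma orbitClosure_minimal (hf : Continuous f) {y : X}
    (hRy : ∀ ε > (0:ℝ), ∃ n, 0 < n ∧ ∀ k, dist y (f^[k * n] y) ≤ ε) (Nj : ℕ)
    {A : Set X} (hA : A ⊆ closure (Set.range fun k => f^[k * Nj] y))
    (hAne : A.Nonempty) (hAcl : IsClosed A) (hAinv : MapsTo f^[Nj] A A) :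
    A = closure (Set.range fun k => f^[k * Nj] y) := by
  have hyA : y ∈ A := by
    rw [← hAcl.closure_eq, Metric.mem_closure_iff]
    intro ε hε
    obtain ⟨z, hz⟩ := hAne
    obtain ⟨m', hm'pos, hm'⟩ := hRy (ε/3) (by positivity)
    obtain ⟨δ, hδ, hδ'⟩ := unif_iter hf (show (0:ℝ) < ε/3 by positivity) (m' * Nj)
    have hzc := hA hz
    rw [Metric.mem_closure_iff] at hzc
    obtain ⟨b, ⟨k0, rfl⟩, hb⟩ := hzc δ hδ
    obtain ⟨c, i, hile, hci⟩ : ∃ c i, i ≤ m' ∧ k0 + i = c * m' := by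
      have hmod : m' * (k0 / m') + k0 % m' = k0 := Nat.div_add_mod k0 m'
      have hr : k0 % m' < m' := Nat.mod_lt _ hm'pos
      have hA2 : (k0 / m' + 1) * m' = m' * (k0 / m') + m' := by ring
      set q := k0 / m' with hq
      set R := k0 % m' with hR
      set Qq := m' * q with hQq
      refine ⟨q + 1, (q+1) * m' - k0, by omega, by omega⟩
    have e1 : dist y (f^[(k0+i)*Nj] y) ≤ ε/3 := by
      rw [show (k0+i)*Nj = (c*Nj)*m' by rw [hci]; ring]
      exact hm' (c*Nj)
    have e2 : dist (f^[i*Nj] (f^[k0*Nj] y)) (f^[i*Nj] z) ≤ ε/3 := by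
      apply hδ' (i*Nj) (Nat.mul_le_mul_right _ hile) _ _ ?_
      rw [dist_comm]; exact hb.le
    have e3 : f^[i*Nj] (f^[k0*Nj] y) = f^[(k0+i)*Nj] y := by
      rw [← Function.iterate_add_apply]; congr 1; ring
    have hmem : f^[i*Nj] z ∈ A := mapsTo_iterate_mul hAinv i hz
    refine ⟨f^[i*Nj] z, hmem, ?_⟩
    calc dist y (f^[i*Nj] z)
        ≤ dist y (f^[(k0+i)*Nj] y) + dist (f^[(k0+i)*Nj] y) (f^[i*Nj] z) :=
          dist_triangle _ _ _
      _ ≤ ε/3 + ε/3 := add_le_add e1 (by rw [← e3]; exact e2)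
      _ < ε := by linarith
  have hrange : ∀ k : ℕ, f^[k * Nj] y ∈ A := by
    intro k
    induction k with
    | zero => simpa using hyA
    | succ k ih =>
      rw [show (k+1) * Nj = Nj + k * Nj by ring, Function.iterate_add_apply]
      exact hAinv ih
  exact Subset.antisymm hA (closure_minimal (by rintro - ⟨k, rfl⟩; exact hrange k) hAcl)

end PartFour

section PartFive
variable {X : Type*} [MetricSpace X] [CompactSpace X] {f : X → X}

theorem min_urr_struct (hf : Continuous f) {M : Set X}
    (hcl : IsClosed M) {y : X} (hy : y ∈ M)
    (hinv : ∀ u ∈ M, f u ∈ M)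
    (hURR : ∀ η > (0:ℝ), ∃ n, 0 < n ∧ ∀ u ∈ M, ∀ k, dist u (f^[k * n] u) ≤ η)
    (hdense : ∀ z ∈ M, ∀ u ∈ M, ∀ η > (0:ℝ), ∃ t, dist (f^[t] z) u ≤ η) :
    IsPeriodicOrbit f M ∨ IsOdometer f M := by
  classical
  have hinvit : ∀ u ∈ M, ∀ t, f^[t] u ∈ M := by
    intro u hu t
    induction t with
    | zero => simpa using hu
    | succ t ih => rw [Function.iterate_succ_apply']; exact hinv _ ih
  by_cases hper : ∃ i, 0 < i ∧ f^[i] y = y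
  · -- periodic orbit case
    left
    obtain ⟨i, hi, hyi⟩ := hper
    have hMeq : M = {w | ∃ j < i, f^[j] y = w} := by
      have hSfin : ({w | ∃ j < i, f^[j] y = w} : Set X).Finite := by
        have heq2 : {w | ∃ j < i, f^[j] y = w} = (fun j => f^[j] y) '' (Set.Iio i) := by
          ext w
          simp [Set.mem_image]
        rw [heq2]
        exact (Set.finite_Iio i).image _
      apply Subset.antisymm
      · intro u hu
        have hucl : u ∈ closure {w | ∃ j < i, f^[j] y = w} := by
          rw [Metric.mem_closure_iff]
          intro ε hε
          obtain ⟨t, ht⟩ := hdense y hy u hu (ε/2) (by positivity)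
          refine ⟨f^[t] y, ⟨t % i, Nat.mod_lt _ hi, (iter_mod_of_periodic hi hyi t).symm⟩, ?_⟩
          rw [dist_comm]
          linarith
        rwa [hSfin.isClosed.closure_eq] at hucl
      · rintro - ⟨j, hj, rfl⟩
        exact hinvit y hy j
    exact ⟨y, hy, i, hi, hyi, hMeq⟩
  · right
    have hURRy : ∀ ε > (0:ℝ), ∃ n, 0 < n ∧ ∀ k, dist y (f^[k * n] y) ≤ ε := by
      intro ε hε
      obtain ⟨n, hn, hh⟩ := hURR ε hε
      exact ⟨n, hn, fun k => hh y hy k⟩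
    have hch : ∀ j : ℕ, ∃ n, 0 < n ∧ ∀ u ∈ M, ∀ k, dist u (f^[k * n] u) ≤ (2:ℝ)⁻¹ ^ j :=
      fun j => hURR _ (by positivity)
    choose nn hnnpos hnn using hch
    set N : ℕ → ℕ := fun j => ∏ l ∈ Finset.range (j+1), nn l with hNdef
    have hNpos : ∀ j, 0 < N j := fun j => Finset.prod_pos (fun l _ => hnnpos l)
    have hNdvd : ∀ j, N j ∣ N (j+1) := fun j =>
      Finset.prod_dvd_prod_of_subset _ _ nn (Finset.range_subset_range.mpr (Nat.le_succ _))
    have hnnN : ∀ j, nn j ∣ N j := fun j =>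
      Finset.dvd_prod_of_mem nn (Finset.self_mem_range_succ j)
    have hNret : ∀ j, ∀ u ∈ M, ∀ k, dist u (f^[k * N j] u) ≤ (2:ℝ)⁻¹ ^ j := by
      intro j u hu k
      obtain ⟨c, hc⟩ := hnnN j
      rw [show k * N j = (k * c) * nn j by rw [hc]; ring]
      exact hnn j u hu _
    set D : ℕ → Set X := fun j => closure (Set.range fun k => f^[k * N j] y) with hDdef
    have hDcl : ∀ j, IsClosed (D j) := fun j => isClosed_closure
    have hyD : ∀ j, y ∈ D j := fun j => subset_closure ⟨0, by simp⟩
    have hDM : ∀ j, D j ⊆ M := by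
      intro j
      apply closure_minimal ?_ hcl
      rintro - ⟨k, rfl⟩
      exact hinvit y hy _
    have hDinv : ∀ j, MapsTo f^[N j] (D j) (D j) := fun j => closure_range_iter_inv hf y (N j)
    have hDmin : ∀ j (A : Set X), A ⊆ D j → A.Nonempty → IsClosed A →
        MapsTo f^[N j] A A → A = D j :=
      fun j A h1 h2 h3 h4 => orbitClosure_minimal hf hURRy (N j) h1 h2 h3 h4
    set P : ℕ → ℕ → Set X := fun j r => f^[r] '' (D j) with hPdef
    have hPcl : ∀ j r, IsClosed (P j r) :=
      fun j r => (((hDcl j).isCompact).image (hf.iterate r)).isClosed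
    have hPne : ∀ j r, (P j r).Nonempty :=
      fun j r => ⟨f^[r] y, Set.mem_image_of_mem _ (hyD j)⟩
    have hPM : ∀ j r, P j r ⊆ M := by
      rintro j r - ⟨d, hd, rfl⟩
      exact hinvit d (hDM j hd) r
    have hPinv : ∀ j r, MapsTo f^[N j] (P j r) (P j r) := by
      rintro j r - ⟨d, hd, rfl⟩
      refine ⟨f^[N j] d, hDinv j hd, ?_⟩
      rw [← Function.iterate_add_apply, ← Function.iterate_add_apply, add_comm]
    have hP0 : ∀ j, P j 0 = D j := by
      intro j
      show f^[0] '' (D j) = D j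
      simp
    have hPmin : ∀ j r (A : Set X), A ⊆ P j r → A.Nonempty → IsClosed A →
        MapsTo f^[N j] A A → A = P j r := by
      intro j r A h1 h2 h3 h4
      have hr : r ≤ r * N j := Nat.le_mul_of_pos_right r (hNpos j)
      set s := r * N j - r with hs
      have hsr : s + r = r * N j := by omega
      have hBD : f^[s] '' A ⊆ D j := by
        calc f^[s] '' A ⊆ f^[s] '' (P j r) := Set.image_mono h1
          _ = f^[s + r] '' (D j) := image_iter_image s r (D j)
          _ = f^[r * N j] '' (D j) := by rw [hsr]
          _ ⊆ D j := (mapsTo_iterate_mul (hDinv j) r).image_subset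
      have hBeq : f^[s] '' A = D j := by
        apply hDmin j _ hBD (h2.image _) ((h3.isCompact.image (hf.iterate s)).isClosed) ?_
        rintro - ⟨a, ha, rfl⟩
        refine ⟨f^[N j] a, h4 ha, ?_⟩
        rw [← Function.iterate_add_apply, ← Function.iterate_add_apply, add_comm]
      apply Subset.antisymm h1
      calc P j r = f^[r] '' (D j) := rfl
        _ = f^[r] '' (f^[s] '' A) := by rw [hBeq]
        _ = f^[r + s] '' A := image_iter_image r s A
        _ = f^[r * N j] '' A := by rw [add_comm, hsr]
        _ ⊆ A := (mapsTo_iterate_mul h4 r).image_subset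
    have hPeqOr : ∀ j a b, (P j a ∩ P j b).Nonempty → P j a = P j b := by
      intro j a b hne2
      have hcl2 : IsClosed (P j a ∩ P j b) := (hPcl j a).inter (hPcl j b)
      have hinv2 : MapsTo f^[N j] (P j a ∩ P j b) (P j a ∩ P j b) :=
        fun w hw => ⟨hPinv j a hw.1, hPinv j b hw.2⟩
      exact (hPmin j a _ inter_subset_left hne2 hcl2 hinv2).symm.trans
        (hPmin j b _ inter_subset_right hne2 hcl2 hinv2)
    have hDNj : ∀ j, f^[N j] '' (D j) = D j := by
      intro j
      apply hDmin j _ ((hDinv j).image_subset) (hPne j (N j)) (hPcl j (N j)) ?_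
      rintro - ⟨d, hd, rfl⟩
      exact ⟨f^[N j] d, hDinv j hd, rfl⟩
    have hex : ∀ j, ∃ r, 0 < r ∧ f^[r] '' (D j) = D j := fun j => ⟨N j, hNpos j, hDNj j⟩
    set p : ℕ → ℕ := fun j => Nat.find (hex j) with hpdef
    have hppos : ∀ j, 0 < p j := fun j => (Nat.find_spec (hex j)).1
    have hpspec : ∀ j, f^[p j] '' (D j) = D j := fun j => (Nat.find_spec (hex j)).2
    have hpmin : ∀ j r, 0 < r → r < p j → f^[r] '' (D j) ≠ D j := by
      intro j r h1 h2
      have := Nat.find_min (hex j) h2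
      tauto
    have hPmod : ∀ j a, f^[a] '' (D j) = P j (a % p j) :=
      fun j a => image_iterate_mod (hppos j) (hpspec j) a
    have huniq : ∀ j a b (w : X), a < p j → b < p j → w ∈ P j a → w ∈ P j b → a = b := by
      intro j a b w ha hb hwa hwb
      by_contra hne2
      have key : ∀ a b, a < b → b < p j → (P j a ∩ P j b).Nonempty → False := by
        intro a b hab hbp hne3
        have heq := hPeqOr j a b hne3
        have hchain : f^[(p j - b) + a] '' (D j) = D j := by
          calc f^[(p j - b) + a] '' (D j)
              = f^[p j - b] '' (f^[a] '' (D j)) := (image_iter_image _ _ _).symm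
            _ = f^[p j - b] '' (f^[b] '' (D j)) := by
                rw [show f^[a] '' (D j) = f^[b] '' (D j) from heq]
            _ = f^[(p j - b) + b] '' (D j) := image_iter_image _ _ _
            _ = f^[p j] '' (D j) := by rw [show (p j - b) + b = p j by omega]
            _ = D j := hpspec j
        exact hpmin j ((p j - b) + a) (by omega) (by omega) hchain
      rcases lt_or_gt_of_ne hne2 with hlt | hgt
      · exact key a b hlt hb ⟨w, hwa, hwb⟩
      · exact key b a hgt ha ⟨w, hwb, hwa⟩
    have hcover : ∀ j, ∀ u ∈ M, ∃ r, r < p j ∧ u ∈ P j r := by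
      intro j u hu
      set U := ⋃ r ∈ Set.Iio (p j), P j r with hUdef
      have hUcl : IsClosed U := (Set.finite_Iio (p j)).isClosed_biUnion (fun r _ => hPcl j r)
      have hmemU : u ∈ U := by
        have hucl : u ∈ closure U := by
          rw [Metric.mem_closure_iff]
          intro ε hε
          obtain ⟨t, ht⟩ := hdense y hy u hu (ε/2) (by positivity)
          refine ⟨f^[t] y, ?_, by rw [dist_comm]; linarith⟩
          apply Set.mem_biUnion (show t % p j ∈ Set.Iio (p j) from Nat.mod_lt _ (hppos j))
          rw [← hPmod j t]
          exact Set.mem_image_of_mem _ (hyD j)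
        rwa [hUcl.closure_eq] at hucl
      rw [hUdef, Set.mem_iUnion₂] at hmemU
      obtain ⟨r, hr, hur⟩ := hmemU
      exact ⟨r, hr, hur⟩
    have hsmall : ∀ j r, ∀ u ∈ P j r, ∀ w ∈ P j r, dist u w ≤ (2:ℝ)⁻¹ ^ j := by
      intro j r u hu w hw
      set O := closure (Set.range fun k => f^[k * N j] u) with hOdef
      have hOP : O ⊆ P j r := by
        apply closure_minimal ?_ (hPcl j r)
        rintro - ⟨k, rfl⟩
        exact mapsTo_iterate_mul (hPinv j r) k hu
      have hOeq : O = P j r := hPmin j r O hOP ⟨u, subset_closure ⟨0, by simp⟩⟩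
        isClosed_closure (closure_range_iter_inv hf u (N j))
      have hum : u ∈ M := hPM j r hu
      have hOball : O ⊆ Metric.closedBall u ((2:ℝ)⁻¹ ^ j) := by
        apply closure_minimal ?_ Metric.isClosed_closedBall
        rintro - ⟨k, rfl⟩
        rw [Metric.mem_closedBall, dist_comm]
        exact hNret j u hum k
      have hwball := hOball (hOeq ▸ hw)
      rw [Metric.mem_closedBall] at hwball
      rw [dist_comm]
      exact hwball
    have hDsub : ∀ j, D (j+1) ⊆ D j := by
      intro j
      apply closure_minimal ?_ (hDcl j)
      rintro - ⟨k, rfl⟩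
      obtain ⟨c, hc⟩ := hNdvd j
      apply subset_closure
      refine ⟨k * c, ?_⟩
      show f^[(k * c) * N j] y = f^[k * N (j+1)] y
      rw [hc]
      congr 1
      ring
    have hpdvd : ∀ j, p j ∣ p (j+1) := by
      intro j
      have h1 : y ∈ P j (p (j+1) % p j) := by
        rw [← hPmod j (p (j+1))]
        have h2 : y ∈ f^[p (j+1)] '' (D (j+1)) := by
          rw [hpspec (j+1)]
          exact hyD (j+1)
        obtain ⟨d, hd, hdy⟩ := h2
        exact ⟨d, hDsub j hd, hdy⟩
      have h2 : y ∈ P j 0 := by rw [hP0 j]; exact hyD j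
      have h3 := huniq j (p (j+1) % p j) 0 y (Nat.mod_lt _ (hppos j)) (hppos j) h1 h2
      exact Nat.dvd_of_mod_eq_zero h3
    have hpmono : Monotone p :=
      monotone_nat_of_le_succ (fun j => Nat.le_of_dvd (hppos (j+1)) (hpdvd j))
    have hptend : Tendsto p atTop atTop := by
      apply tendsto_atTop_atTop_of_monotone hpmono
      by_contra hb
      push_neg at hb
      obtain ⟨B, hB⟩ := hb
      have hbdd : BddAbove (Set.range p) := by
        refine ⟨B, ?_⟩
        rintro - ⟨j, rfl⟩
        exact (hB j).le
      have hrne : (Set.range p).Nonempty := ⟨p 0, 0, rfl⟩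
      obtain ⟨j1, hj1⟩ : ∃ j1, p j1 = sSup (Set.range p) := by
        obtain ⟨j1, hj1⟩ := Nat.sSup_mem hrne hbdd
        exact ⟨j1, hj1⟩
      have hconst : ∀ j, j1 ≤ j → p j = p j1 := by
        intro j hj
        have ha1 : p j1 ≤ p j := hpmono hj
        have ha2 : p j ≤ sSup (Set.range p) := le_csSup hbdd ⟨j, rfl⟩
        rw [← hj1] at ha2
        omega
      have hdd : ∀ j, j1 ≤ j → dist y (f^[p j1] y) ≤ (2:ℝ)⁻¹ ^ j := by
        intro j hj
        have hyP : y ∈ P j 0 := by rw [hP0 j]; exact hyD j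
        have hfy : f^[p j1] y ∈ P j 0 := by
          rw [hP0 j, ← hconst j hj, ← hpspec j]
          exact Set.mem_image_of_mem _ (hyD j)
        exact hsmall j 0 y hyP _ hfy
      have hdd' : ∀ j : ℕ, dist y (f^[p j1] y) ≤ (2:ℝ)⁻¹ ^ j := by
        intro j
        calc dist y (f^[p j1] y) ≤ (2:ℝ)⁻¹ ^ (max j j1) := hdd _ (le_max_right _ _)
          _ ≤ (2:ℝ)⁻¹ ^ j :=
            pow_le_pow_of_le_one (by norm_num) (by norm_num) (le_max_left _ _)
      exact hper ⟨p j1, hppos j1, (eq_of_dist_le_pow hdd').symm⟩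
    set PS : PeriodicStructure := ⟨p, hppos, hpdvd, hptend⟩ with hPS
    have hPSm : PS.m = p := rfl
    haveI : T2Space PS.space :=
      inferInstanceAs (T2Space {x : ℕ → ℕ // ∀ j, x j < PS.m j ∧ x (j + 1) % PS.m j = x j})
    haveI : CompactSpace M := isCompact_iff_compactSpace.mp hcl.isCompact
    have hexr : ∀ (j : ℕ) (z : M), ∃ r, r < p j ∧ (z : X) ∈ P j r := fun j z => hcover j z z.2
    set idx : ℕ → M → ℕ := fun j z => Nat.find (hexr j z) with hidxdef
    have hidx : ∀ j z, idx j z < p j ∧ (z : X) ∈ P j (idx j z) := fun j z => Nat.find_spec (hexr j z)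
    have hidxuniq : ∀ j (z : M) r, r < p j → (z : X) ∈ P j r → idx j z = r :=
      fun j z r h1 h2 => huniq j (idx j z) r z (hidx j z).1 h1 (hidx j z).2 h2
    have hcompat : ∀ (z : M) (j : ℕ), idx (j+1) z % p j = idx j z := by
      intro z j
      have h1 : (z:X) ∈ P j (idx (j+1) z % p j) := by
        rw [← hPmod j (idx (j+1) z)]
        obtain ⟨d, hd, hdz⟩ := (hidx (j+1) z).2
        exact ⟨d, hDsub j hd, hdz⟩
      exact (hidxuniq j z _ (Nat.mod_lt _ (hppos j)) h1).symm
    set Q : M → PS.space :=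
      fun z => ⟨fun j => idx j z, fun j => ⟨(hidx j z).1, hcompat z j⟩⟩ with hQ
    have hQcont : Continuous Q := by
      apply Continuous.subtype_mk
      apply continuous_pi
      intro j
      rw [continuous_discrete_rng]
      intro r
      by_cases hr : r < p j
      · have hset : (fun z : M => idx j z) ⁻¹' {r} = Subtype.val ⁻¹' (P j r) := by
          ext z
          simp only [Set.mem_preimage, Set.mem_singleton_iff]
          constructor
          · rintro rfl
            exact (hidx j z).2
          · intro hz
            exact hidxuniq j z r hr hz
        rw [hset, ← isClosed_compl_iff]
        have hcompl : (Subtype.val ⁻¹' (P j r) : Set M)ᶜ =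
            Subtype.val ⁻¹' (⋃ r' ∈ Set.Iio (p j) \ {r}, P j r') := by
          ext z
          simp only [Set.mem_compl_iff, Set.mem_preimage, Set.mem_iUnion, Set.mem_diff,
            Set.mem_Iio, Set.mem_singleton_iff, exists_prop]
          constructor
          · intro hz
            obtain ⟨r', hr', hzr'⟩ := hcover j z z.2
            exact ⟨r', ⟨hr', fun hrr => hz (hrr ▸ hzr')⟩, hzr'⟩
          · rintro ⟨r', ⟨hr'1, hr'2⟩, hzr'⟩ hz
            exact hr'2 (huniq j r' r z hr'1 hr hzr' hz)
        rw [hcompl]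
        apply IsClosed.preimage continuous_subtype_val
        apply Set.Finite.isClosed_biUnion (Set.Finite.subset (Set.finite_Iio (p j)) Set.diff_subset)
        exact fun r' _ => hPcl j r'
      · have hset : (fun z : M => idx j z) ⁻¹' {r} = ∅ := by
          ext z
          simp only [Set.mem_preimage, Set.mem_singleton_iff, Set.mem_empty_iff_false, iff_false]
          intro hrr
          exact hr (hrr ▸ (hidx j z).1)
        rw [hset]
        exact isOpen_empty
    have hQinj : Function.Injective Q := by
      intro z w hzw
      have hco : ∀ j, idx j z = idx j w := by
        intro j
        exact congrFun (congrArg Subtype.val hzw) j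
      apply Subtype.ext
      apply eq_of_dist_le_pow
      intro j
      refine hsmall j (idx j z) z (hidx j z).2 w ?_
      rw [hco j]
      exact (hidx j w).2
    have hQsurj : Function.Surjective Q := by
      intro c
      set V : ℕ → Set X := fun j => P j (c.1 j) with hV
      have hVne : ∀ j, (V j).Nonempty := fun j => hPne j _
      have hVcl : ∀ j, IsClosed (V j) := fun j => hPcl j _
      have hVsub : ∀ j, V (j+1) ⊆ V j := by
        intro j w hw
        have h1 : w ∈ P j (c.1 (j+1) % p j) := by
          rw [← hPmod j (c.1 (j+1))]
          obtain ⟨d, hd, hdw⟩ := hw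
          exact ⟨d, hDsub j hd, hdw⟩
        have h2 := (c.2 j).2
        rw [show PS.m j = p j from rfl] at h2
        rwa [h2] at h1
      obtain ⟨z, hz⟩ := IsCompact.nonempty_iInter_of_sequence_nonempty_isCompact_isClosed V
        hVsub hVne ((hVcl 0).isCompact) hVcl
      have hzM : z ∈ M := hPM 0 _ (mem_iInter.mp hz 0)
      refine ⟨⟨z, hzM⟩, ?_⟩
      apply Subtype.ext
      funext j
      show idx j ⟨z, hzM⟩ = c.1 j
      have := (c.2 j).1
      rw [show PS.m j = p j from rfl] at this
      exact hidxuniq j ⟨z, hzM⟩ (c.1 j) this (mem_iInter.mp hz j)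
    set E : M ≃ PS.space := Equiv.ofBijective Q ⟨hQinj, hQsurj⟩ with hE
    have hEcont : Continuous E := hQcont
    set e : M ≃ₜ PS.space := Continuous.homeoOfEquivCompactToT2 (f := E) hEcont with he
    refine ⟨PS, e.symm, ?_⟩
    have hstep : ∀ w : M, Q ⟨f (w:X), hinv _ w.2⟩ = PS.step (Q w) := by
      intro w
      apply Subtype.ext
      funext j
      show idx j ⟨f (w:X), hinv _ w.2⟩ = (idx j w + 1) % p j
      apply hidxuniq
      · exact Nat.mod_lt _ (hppos j)
      · rw [← hPmod j (idx j w + 1)]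
        obtain ⟨d, hd, hdw⟩ := (hidx j w).2
        refine ⟨d, hd, ?_⟩
        rw [Function.iterate_succ_apply', hdw]
    intro z
    set w : M := e.symm z with hw
    have hQw : Q w = z := by
      have h1 : e w = z := by rw [hw]; exact e.apply_symm_apply z
      exact h1
    have h2 : Q ⟨f (w:X), hinv _ w.2⟩ = PS.step z := by rw [hstep w, hQw]
    have h3 : (⟨f (w:X), hinv _ w.2⟩ : M) = e.symm (PS.step z) := by
      apply hQinj
      rw [h2]
      have h4 : e (e.symm (PS.step z)) = PS.step z := e.apply_symm_apply (PS.step z)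
      exact h4.symm
    calc f ((e.symm z : M) : X) = ((⟨f (w:X), hinv _ w.2⟩ : M) : X) := rfl
      _ = ((e.symm (PS.step z) : M) : X) := congrArg Subtype.val h3

end PartFive

theorem omegaLimit_periodic_or_odometer_of_approx {X : Type*} [MetricSpace X]
    [CompactSpace X] (f : X → X) (hf : Continuous f) (x : X)
    (h : ∀ ε > (0 : ℝ), ∃ xe : X,
      (IsPeriodicOrbit f (omegaLimitPt f xe) ∨ IsOdometer f (omegaLimitPt f xe)) ∧
      Filter.limsup (fun i => dist (f^[i] x) (f^[i] xe)) Filter.atTop ≤ ε) :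
    IsPeriodicOrbit f (omegaLimitPt f x) ∨ IsOdometer f (omegaLimitPt f x) := by
  obtain ⟨y, hy⟩ := omegaSeq_nonempty (fun i => f^[i] x)
  exact min_urr_struct hf (omegaSeq_closed _) hy
    (fun u hu => by simpa using omega_iterate_mem hf 1 hu)
    (M_urr hf h) (M_dense hf h)
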